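/- arXiv:1310.2381 — 4 statements merged into one kernel-verified Lean document; each statement's English description precedes it below -/
import Mathlib

section
/- Let A₁,…,A_k be r×r matrices over F₂ with each A_i invertible and A_i + A_j invertible for i ≠ j, and let X be any r×r matrix over F₂. For i ∈ [k] let z_i be the number of zero columns of I + X·A_i, and let z_{k+1} be the number of zero columns of X. Then z_i + z_j ≤ r for all distinct i, j ∈ [k+1]. -/
/-- Number of zero columns of a square matrix over `ZMod 2`. -/
def zeroColCount {r : ℕ} (M : Matrix (Fin r) (Fin r) (ZMod 2)) : ℕ :=
  (Finset.univ.filter (fun j : Fin r => ∀ i, M i j = 0)).card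

open Matrix Submodule Module

namespace Raid6Aux

variable {r : ℕ}

/-- The zero-column set of a matrix. -/
def zc (M : Matrix (Fin r) (Fin r) (ZMod 2)) : Finset (Fin r) :=
  Finset.univ.filter (fun j : Fin r => ∀ i, M i j = 0)

lemma zeroColCount_eq (M : Matrix (Fin r) (Fin r) (ZMod 2)) :
    zeroColCount M = (zc M).card := rfl

/-- Span of the standard basis vectors indexed by a finset. -/
noncomputable def Esp (S : Finset (Fin r)) : Submodule (ZMod 2) (Fin r → ZMod 2) :=
  Submodule.span (ZMod 2)
    (Set.range (fun c : S => (Pi.single (c : Fin r) (1 : ZMod 2) : Fin r → ZMod 2)))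

lemma linIndep (S : Finset (Fin r)) :
    LinearIndependent (ZMod 2)
      (fun c : S => (Pi.single (c : Fin r) (1 : ZMod 2) : Fin r → ZMod 2)) := by
  have h := (Pi.basisFun (ZMod 2) (Fin r)).linearIndependent.comp
    (fun c : S => (c : Fin r)) Subtype.val_injective
  have he : (fun c : S => (Pi.single (c : Fin r) (1 : ZMod 2) : Fin r → ZMod 2)) =
      (⇑(Pi.basisFun (ZMod 2) (Fin r)) ∘ fun c : S => (c : Fin r)) := by
    funext c
    simp [Pi.basisFun_apply]
  rw [he]
  exact h

lemma finrank_Esp (S : Finset (Fin r)) :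
    finrank (ZMod 2) (Esp S) = S.card := by
  rw [Esp, finrank_span_eq_card (linIndep S)]
  simp

lemma key (V W : Submodule (ZMod 2) (Fin r → ZMod 2)) (h : V ⊓ W = ⊥) :
    finrank (ZMod 2) V + finrank (ZMod 2) W ≤ r := by
  have h1 := Submodule.finrank_sup_add_finrank_inf_eq V W
  rw [h, finrank_bot, add_zero] at h1
  rw [← h1]
  have h2 := Submodule.finrank_le (V ⊔ W)
  simpa using h2

/-- Generators of `Esp (zc M)` are in the kernel of `M.mulVecLin`. -/
lemma Esp_le_ker (M : Matrix (Fin r) (Fin r) (ZMod 2)) :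
    Esp (zc M) ≤ LinearMap.ker M.mulVecLin := by
  rw [Esp, Submodule.span_le]
  rintro _ ⟨c, rfl⟩
  have hc : ∀ i, M i (c : Fin r) = 0 := (Finset.mem_filter.mp c.2).2
  simp only [SetLike.mem_coe, LinearMap.mem_ker, mulVecLin_apply, mulVec_single]
  ext i
  simp [hc i]

lemma mulVec_eq_self_of_mem {M : Matrix (Fin r) (Fin r) (ZMod 2)}
    {u : Fin r → ZMod 2} (hu : u ∈ Esp (zc (1 + M))) : M *ᵥ u = u := by
  have h := Esp_le_ker (1 + M) hu
  rw [LinearMap.mem_ker, mulVecLin_apply, add_mulVec, one_mulVec] at h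
  have : M *ᵥ u = -u := eq_neg_of_add_eq_zero_right h
  rw [this]
  ext i
  exact CharTwo.neg_eq _

lemma mulVec_eq_zero_of_mem {M : Matrix (Fin r) (Fin r) (ZMod 2)}
    {u : Fin r → ZMod 2} (hu : u ∈ Esp (zc M)) : M *ᵥ u = 0 := by
  have h := Esp_le_ker M hu
  rwa [LinearMap.mem_ker, mulVecLin_apply] at h

end Raid6Aux

open Raid6Aux in
theorem stmt2 {r k : ℕ} (A : Fin k → Matrix (Fin r) (Fin r) (ZMod 2))
    (hA : ∀ i, IsUnit (A i))
    (hAA : ∀ i j, i ≠ j → IsUnit (A i + A j))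
    (X : Matrix (Fin r) (Fin r) (ZMod 2))
    (z : Fin (k + 1) → ℕ)
    (hz : ∀ i : Fin k, z i.castSucc = zeroColCount (1 + X * A i))
    (hzlast : z (Fin.last k) = zeroColCount X) :
    ∀ i j : Fin (k + 1), i ≠ j → z i + z j ≤ r := by
  classical
  -- subspace associated to index i < k
  set V : Fin k → Submodule (ZMod 2) (Fin r → ZMod 2) :=
    fun i => Submodule.map (A i).mulVecLin (Esp (zc (1 + X * A i))) with hV
  have hinj : ∀ i, Function.Injective (A i).mulVecLin := by
    intro i
    have := (Matrix.mulVec_injective_iff_isUnit (A := A i)).2 (hA i)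
    intro x y hxy
    exact this (by simpa [mulVecLin_apply] using hxy)
  have hfr : ∀ i : Fin k, finrank (ZMod 2) (V i) = z i.castSucc := by
    intro i
    rw [hz i, zeroColCount_eq, ← finrank_Esp (zc (1 + X * A i))]
    exact (LinearEquiv.finrank_eq
      (Submodule.equivMapOfInjective _ (hinj i) (Esp (zc (1 + X * A i))))).symm
  have hfrlast : finrank (ZMod 2) (Esp (zc X)) = z (Fin.last k) := by
    rw [hzlast, zeroColCount_eq, finrank_Esp]
  -- recovery property: X *ᵥ v = u for v = A i *ᵥ u with u in the span
  have hrec : ∀ (i : Fin k) (v : Fin r → ZMod 2), v ∈ V i →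
      ∃ u ∈ Esp (zc (1 + X * A i)), (A i) *ᵥ u = v ∧ X *ᵥ v = u := by
    intro i v hv
    rcases hv with ⟨u, hu, huv⟩
    rw [mulVecLin_apply] at huv
    refine ⟨u, hu, huv, ?_⟩
    rw [← huv, mulVec_mulVec]
    exact mulVec_eq_self_of_mem hu
  -- case: two non-last indices
  have Hcc : ∀ a b : Fin k, a ≠ b → z a.castSucc + z b.castSucc ≤ r := by
    intro a b hab
    rw [← hfr a, ← hfr b]
    apply key
    rw [eq_bot_iff]
    rintro v ⟨hva, hvb⟩
    obtain ⟨u, hu, huv, hXu⟩ := hrec a v hva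
    obtain ⟨w, hw, hwv, hXw⟩ := hrec b v hvb
    have huw : u = w := by rw [← hXu, ← hXw]
    have hsum : (A a + A b) *ᵥ u = 0 := by
      rw [add_mulVec, huv, huw, hwv]
      ext i
      exact CharTwo.add_self_eq_zero _
    have hu0 : u = 0 := by
      have hinj' := (Matrix.mulVec_injective_iff_isUnit (A := A a + A b)).2
        (hAA a b hab)
      exact hinj' (by rw [mulVec_zero]; exact hsum)
    simp only [Submodule.mem_bot]
    rw [← huv, hu0, mulVec_zero]
  -- case: one non-last and last
  have Hcl : ∀ a : Fin k, z a.castSucc + z (Fin.last k) ≤ r := by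
    intro a
    rw [← hfr a, ← hfrlast]
    apply key
    rw [eq_bot_iff]
    rintro v ⟨hva, hvl⟩
    obtain ⟨u, hu, huv, hXu⟩ := hrec a v hva
    have hXv : X *ᵥ v = 0 := mulVec_eq_zero_of_mem hvl
    have hu0 : u = 0 := by rw [← hXu, hXv]
    simp only [Submodule.mem_bot]
    rw [← huv, hu0, mulVec_zero]
  intro i j hij
  rcases Fin.eq_castSucc_or_eq_last i with ⟨a, rfl⟩ | rfl <;>
    rcases Fin.eq_castSucc_or_eq_last j with ⟨b, rfl⟩ | rfl
  · exact Hcc a b (fun h => hij (by rw [h]))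
  · exact Hcl a
  · rw [add_comm]; exact Hcl b
  · exact absurd rfl hij
end

section
/- Let A₁,…,A_k be r×r matrices over F₂ such that each A_i is invertible and A_i + A_j is invertible for all i ≠ j, with k ≥ 2. Then for any r×r matrix X over F₂, the total number of zero columns of the r×(k+1)r matrix [I+XA₁ | I+XA₂ | ⋯ | I+XA_k | X] is at most (k+1)r/2. -/
open Matrix


/-- If two finsets carry families whose joint "supported" linear combinations vanish only
trivially, then the sum of their cardinalities is at most the dimension `r`. -/
lemma pair_card_le {r : ℕ} (S T : Finset (Fin r)) (v w : Fin r → (Fin r → ZMod 2))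
    (h : ∀ g₁ g₂ : Fin r → ZMod 2, (∀ j, j ∉ S → g₁ j = 0) → (∀ j, j ∉ T → g₂ j = 0) →
      (∑ j, (g₁ j • v j + g₂ j • w j)) = 0 → ∀ j, g₁ j = 0 ∧ g₂ j = 0) :
    S.card + T.card ≤ r := by
  classical
  set u : (↥S ⊕ ↥T) → (Fin r → ZMod 2) := Sum.elim (fun a => v a) (fun b => w b) with hu
  have hli : LinearIndependent (ZMod 2) u := by
    rw [Fintype.linearIndependent_iff]
    intro g hg
    set g₁ : Fin r → ZMod 2 := fun j => if hj : j ∈ S then g (Sum.inl ⟨j, hj⟩) else 0 with hg₁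
    set g₂ : Fin r → ZMod 2 := fun j => if hj : j ∈ T then g (Sum.inr ⟨j, hj⟩) else 0 with hg₂
    have hsupp₁ : ∀ j, j ∉ S → g₁ j = 0 := fun j hj => by simp [hg₁, hj]
    have hsupp₂ : ∀ j, j ∉ T → g₂ j = 0 := fun j hj => by simp [hg₂, hj]
    have hsum1 : ∑ j, g₁ j • v j = ∑ a : ↥S, g (Sum.inl a) • v a := by
      rw [← Finset.sum_subset (Finset.subset_univ S)
        (fun j _ hj => by rw [hsupp₁ j hj, zero_smul])]
      rw [← Finset.sum_attach S (fun j => g₁ j • v j)]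
      refine Finset.sum_congr rfl fun a _ => ?_
      simp [hg₁, a.2]
    have hsum2 : ∑ j, g₂ j • w j = ∑ b : ↥T, g (Sum.inr b) • w b := by
      rw [← Finset.sum_subset (Finset.subset_univ T)
        (fun j _ hj => by rw [hsupp₂ j hj, zero_smul])]
      rw [← Finset.sum_attach T (fun j => g₂ j • w j)]
      refine Finset.sum_congr rfl fun b _ => ?_
      simp [hg₂, b.2]
    have hzero : (∑ j, (g₁ j • v j + g₂ j • w j)) = 0 := by
      rw [Finset.sum_add_distrib, hsum1, hsum2]
      rw [Fintype.sum_sum_type (fun i => g i • u i)] at hg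
      simpa [hu] using hg
    have hz := h g₁ g₂ hsupp₁ hsupp₂ hzero
    rintro (a | b)
    · have := (hz a).1
      simpa [hg₁, a.2] using this
    · have := (hz b).2
      simpa [hg₂, b.2] using this
  have hcard := hli.fintype_card_le_finrank
  simpa [Fintype.card_sum, Module.finrank_pi] using hcard

lemma sum_smul_single {r : ℕ} (c : Fin r → ZMod 2) :
    ∑ j, c j • (Pi.single j 1 : Fin r → ZMod 2) = c := by
  ext x
  simp [Pi.single_apply, Finset.sum_apply, mul_ite]

/-- The total number of zero columns of the concatenated matrix
`[I+XA₁ | ⋯ | I+XA_k | X]` is the sum of the zero-column counts of its blocks;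
it is at most `(k+1)r/2`, i.e. twice it is at most `(k+1)r`. -/
theorem stmt4 {r k : ℕ} (hk : 2 ≤ k) (A : Fin k → Matrix (Fin r) (Fin r) (ZMod 2))
    (hA : ∀ i, IsUnit (A i))
    (hAA : ∀ i j, i ≠ j → IsUnit (A i + A j))
    (X : Matrix (Fin r) (Fin r) (ZMod 2)) :
    2 * ((∑ i, zeroColCount (1 + X * A i)) + zeroColCount X) ≤ (k + 1) * r := by
  classical
  set s : Fin k → ℕ := fun i => zeroColCount (1 + X * A i) with hs
  set s0 : ℕ := zeroColCount X with hs0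
  -- membership characterization
  have hmem : ∀ (i : Fin k) (j : Fin r),
      (j ∈ Finset.univ.filter (fun j : Fin r => ∀ x, (1 + X * A i) x j = 0)) →
      X *ᵥ (fun x => A i x j) = (Pi.single j 1 : Fin r → ZMod 2) := by
    intro i j hj
    rw [Finset.mem_filter] at hj
    ext x
    have h1 := hj.2 x
    have h2 : (X * A i) x j = (1 : Matrix (Fin r) (Fin r) (ZMod 2)) x j := by
      have : (1 : Matrix (Fin r) (Fin r) (ZMod 2)) x j + (X * A i) x j = 0 := by
        simpa using h1
      have hch : ∀ a b : ZMod 2, a + b = 0 → b = a := by decide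
      exact hch _ _ this
    have h3 : (X *ᵥ fun x => A i x j) x = (X * A i) x j := by
      simp [Matrix.mulVec, Matrix.mul_apply, dotProduct]
    rw [h3, h2, Matrix.one_apply, Pi.single_apply]
  -- pairwise bound among A-blocks
  have pair1 : ∀ i l : Fin k, i ≠ l → s i + s l ≤ r := by
    intro i l hne
    refine pair_card_le _ _ (fun j => fun x => A i x j) (fun j => fun x => A l x j) ?_
    intro g₁ g₂ hsupp₁ hsupp₂ hzero j
    -- apply X to the vanishing combination
    have happ : X *ᵥ (∑ j, (g₁ j • (fun x => A i x j) + g₂ j • (fun x => A l x j))) =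
        ∑ j, (g₁ j • (X *ᵥ fun x => A i x j) + g₂ j • (X *ᵥ fun x => A l x j)) := by
      simp only [← Matrix.mulVecLin_apply, map_sum, map_add, _root_.map_smul]
    rw [hzero, Matrix.mulVec_zero] at happ
    have hsingle : ∑ j, ((g₁ j + g₂ j) • (Pi.single j 1 : Fin r → ZMod 2)) = 0 := by
      rw [show (0 : Fin r → ZMod 2) = ∑ j, (g₁ j • (X *ᵥ fun x => A i x j)
        + g₂ j • (X *ᵥ fun x => A l x j)) from happ]
      refine Finset.sum_congr rfl fun j _ => ?_
      rw [add_smul]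
      congr 1
      · by_cases hj : j ∈ Finset.univ.filter (fun j : Fin r => ∀ x, (1 + X * A i) x j = 0)
        · rw [hmem i j hj]
        · rw [hsupp₁ j hj, zero_smul, zero_smul]
      · by_cases hj : j ∈ Finset.univ.filter (fun j : Fin r => ∀ x, (1 + X * A l) x j = 0)
        · rw [hmem l j hj]
        · rw [hsupp₂ j hj, zero_smul, zero_smul]
    rw [sum_smul_single (fun j => g₁ j + g₂ j)] at hsingle
    have hadd : ∀ x, g₁ x + g₂ x = 0 := fun x => congrFun hsingle x
    have heq : g₂ = g₁ := by
      funext x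
      have hch : ∀ a b : ZMod 2, a + b = 0 → b = a := by decide
      exact hch _ _ (hadd x)
    -- now use invertibility of A i + A l
    have hmv : (A i + A l) *ᵥ g₁ = 0 := by
      have : ∑ j, (g₁ j • (fun x => A i x j) + g₂ j • (fun x => A l x j)) =
          (A i + A l) *ᵥ g₁ := by
        rw [heq]
        ext x
        simp [Matrix.mulVec, dotProduct, Finset.sum_apply, Matrix.add_apply, mul_add,
          add_mul, mul_comm, Finset.sum_add_distrib]
      rw [← this, hzero]
    have hinj := Matrix.mulVec_injective_iff_isUnit.2 (hAA i l hne)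
    have hg₁ : g₁ = 0 := by
      apply hinj
      rw [hmv, Matrix.mulVec_zero]
    constructor
    · rw [hg₁]; rfl
    · rw [heq, hg₁]; rfl
  -- bound between an A-block and the X-block
  have pair2 : ∀ i : Fin k, s i + s0 ≤ r := by
    intro i
    refine pair_card_le _ _ (fun j => fun x => A i x j)
      (fun j => (Pi.single j 1 : Fin r → ZMod 2)) ?_
    intro g₁ g₂ hsupp₁ hsupp₂ hzero j
    have hXcol : ∀ j : Fin r, (j ∈ Finset.univ.filter (fun j : Fin r => ∀ x, X x j = 0)) →
        X *ᵥ (Pi.single j 1 : Fin r → ZMod 2) = 0 := by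
      intro j hj
      rw [Finset.mem_filter] at hj
      ext x
      simp [hj.2 x]
    have happ : X *ᵥ (∑ j, (g₁ j • (fun x => A i x j) + g₂ j • (Pi.single j 1 : Fin r → ZMod 2))) =
        ∑ j, (g₁ j • (X *ᵥ fun x => A i x j) + g₂ j • (X *ᵥ (Pi.single j 1 : Fin r → ZMod 2))) := by
      simp only [← Matrix.mulVecLin_apply, map_sum, map_add, _root_.map_smul]
    rw [hzero, Matrix.mulVec_zero] at happ
    have hsingle : ∑ j, (g₁ j • (Pi.single j 1 : Fin r → ZMod 2)) = 0 := by
      rw [show (0 : Fin r → ZMod 2) = ∑ j, (g₁ j • (X *ᵥ fun x => A i x j)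
        + g₂ j • (X *ᵥ (Pi.single j 1 : Fin r → ZMod 2))) from happ]
      refine Finset.sum_congr rfl fun j _ => ?_
      have h2 : g₂ j • (X *ᵥ (Pi.single j 1 : Fin r → ZMod 2)) = 0 := by
        by_cases hj : j ∈ Finset.univ.filter (fun j : Fin r => ∀ x, X x j = 0)
        · rw [hXcol j hj, smul_zero]
        · rw [hsupp₂ j hj, zero_smul]
      rw [h2, add_zero]
      by_cases hj : j ∈ Finset.univ.filter (fun j : Fin r => ∀ x, (1 + X * A i) x j = 0)
      · rw [hmem i j hj]
      · rw [hsupp₁ j hj, zero_smul, zero_smul]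
    rw [sum_smul_single g₁] at hsingle
    have hg₁ : g₁ = 0 := hsingle
    have hsingle2 : ∑ j, (g₂ j • (Pi.single j 1 : Fin r → ZMod 2)) = 0 := by
      rw [← hzero]
      refine (Finset.sum_congr rfl fun j _ => ?_).symm
      rw [hg₁]
      simp
    rw [sum_smul_single g₂] at hsingle2
    exact ⟨by rw [hg₁]; rfl, by rw [hsingle2]; rfl⟩
  -- arithmetic
  haveI : NeZero k := ⟨by omega⟩
  have hne1 : ∀ i : Fin k, i ≠ i + 1 := by
    intro i hi
    rw [left_eq_add] at hi
    have h2 := congrArg Fin.val hi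
    rw [Fin.val_one', Fin.val_zero, Nat.mod_eq_of_lt (by omega)] at h2
    exact one_ne_zero h2
  have hconst : ∀ c : ℕ, ∑ _i : Fin k, c = k * c := by
    intro c
    rw [Finset.sum_const, Finset.card_univ, Fintype.card_fin, smul_eq_mul]
  have h1 : 2 * ∑ i, s i ≤ k * r := by
    have hle : ∑ i : Fin k, (s i + s (i + 1)) ≤ ∑ _i : Fin k, r :=
      Finset.sum_le_sum fun i _ => pair1 i (i + 1) (hne1 i)
    have hshift : ∑ i : Fin k, s (i + 1) = ∑ i : Fin k, s i :=
      Fintype.sum_equiv (Equiv.addRight (1 : Fin k)) _ _ (fun i => rfl)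
    rw [Finset.sum_add_distrib, hshift, hconst] at hle
    omega
  have h2 : ∑ i, s i + k * s0 ≤ k * r := by
    have hle : ∑ i : Fin k, (s i + s0) ≤ ∑ _i : Fin k, r :=
      Finset.sum_le_sum fun i _ => pair2 i
    rw [Finset.sum_add_distrib, hconst, hconst] at hle
    omega
  obtain ⟨m, rfl⟩ : ∃ m, k = m + 2 := ⟨k - 2, by omega⟩
  set a := ∑ i, s i
  have key : (m + 2) * (2 * (a + s0)) ≤ (m + 2) * (((m + 2) + 1) * r) := by
    nlinarith [Nat.mul_le_mul_left (m + 1) h1, Nat.mul_le_mul_left 2 h2]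
  exact Nat.le_of_mul_le_mul_left key (by omega)
end

section
/- Let B₁,…,B_{k+1} be r×r matrices over F₂ such that B_i + B_j is invertible for all distinct i,j ∈ [k+1]. Define the 2r×2r matrices B'_i = diag(B_i + B_{k+1}, B_i + B_{k+1}) for i ∈ [k], B'_{k+1} = [[0, I_r],[0, 0]], and B'_{k+2} = [[0, 0],[I_r, 0]]. Then B'_i + B'_j is invertible for all distinct i, j ∈ [k+2]. -/
lemma aux_upper {r : ℕ} (A X D : Matrix (Fin r) (Fin r) (ZMod 2)) (hA : IsUnit A)
    (hD : IsUnit D) : IsUnit (Matrix.fromBlocks A X 0 D) := by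
  rw [Matrix.isUnit_iff_isUnit_det, Matrix.det_fromBlocks_zero₂₁]
  exact ((Matrix.isUnit_iff_isUnit_det A).mp hA).mul ((Matrix.isUnit_iff_isUnit_det D).mp hD)

lemma aux_lower {r : ℕ} (A X D : Matrix (Fin r) (Fin r) (ZMod 2)) (hA : IsUnit A)
    (hD : IsUnit D) : IsUnit (Matrix.fromBlocks A 0 X D) := by
  rw [Matrix.isUnit_iff_isUnit_det, Matrix.det_fromBlocks_zero₁₂]
  exact ((Matrix.isUnit_iff_isUnit_det A).mp hA).mul ((Matrix.isUnit_iff_isUnit_det D).mp hD)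

lemma aux_self {α : Type*} [AddCommGroup α] (a : α) (h2 : ∀ x : α, x + x = 0)
    (b c : α) : (b + a) + (c + a) = b + c := by
  rw [add_add_add_comm, h2, add_zero]

theorem stmt7 {r k : ℕ} (B : Fin (k + 1) → Matrix (Fin r) (Fin r) (ZMod 2))
    (hB : ∀ i j : Fin (k + 1), i ≠ j → IsUnit (B i + B j))
    (B' : Fin (k + 2) → Matrix (Fin r ⊕ Fin r) (Fin r ⊕ Fin r) (ZMod 2))
    (hB'₁ : ∀ i : Fin k, B' i.castSucc.castSucc =
      Matrix.fromBlocks (B i.castSucc + B (Fin.last k)) 0 0 (B i.castSucc + B (Fin.last k)))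
    (hB'₂ : B' ⟨k, by omega⟩ = Matrix.fromBlocks 0 1 0 0)
    (hB'₃ : B' (Fin.last (k + 1)) = Matrix.fromBlocks 0 0 1 0) :
    ∀ i j : Fin (k + 2), i ≠ j → IsUnit (B' i + B' j) := by
  have h2 : ∀ X : Matrix (Fin r) (Fin r) (ZMod 2), X + X = 0 := by
    intro X
    ext a b
    simp [Matrix.add_apply, CharTwo.add_self_eq_zero]
  suffices H : ∀ i j : Fin (k + 2), i < j → IsUnit (B' i + B' j) by
    intro i j hij
    rcases hij.lt_or_gt with hlt | hlt
    · exact H i j hlt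
    · rw [add_comm]; exact H j i hlt
  intro i j hlt
  · -- i < j
    by_cases hjk : (j : ℕ) < k
    · -- both small
      have hik : (i : ℕ) < k := lt_trans hlt hjk
      have hi : i = (⟨i, hik⟩ : Fin k).castSucc.castSucc := by ext; simp
      have hj : j = (⟨j, hjk⟩ : Fin k).castSucc.castSucc := by ext; simp
      rw [hi, hj, hB'₁, hB'₁, Matrix.fromBlocks_add]
      simp only [add_zero]
      have key : (B (⟨i, hik⟩ : Fin k).castSucc + B (Fin.last k)) +
          (B (⟨j, hjk⟩ : Fin k).castSucc + B (Fin.last k)) =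
          B (⟨i, hik⟩ : Fin k).castSucc + B (⟨j, hjk⟩ : Fin k).castSucc :=
        aux_self _ h2 _ _
      rw [key]
      exact aux_upper _ _ _ (hB _ _ (by simp [Fin.ext_iff]; omega))
        (hB _ _ (by simp [Fin.ext_iff]; omega))
    · by_cases hjk' : (j : ℕ) = k
      · -- j = ⟨k⟩, i small
        have hik : (i : ℕ) < k := by omega
        have hi : i = (⟨i, hik⟩ : Fin k).castSucc.castSucc := by ext; simp
        have hj : j = (⟨k, by omega⟩ : Fin (k + 2)) := by ext; simp [hjk']
        rw [hi, hj, hB'₁, hB'₂, Matrix.fromBlocks_add]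
        simp only [add_zero, zero_add]
        exact aux_upper _ _ _
          (hB _ _ (by simp [Fin.ext_iff]; omega)) (hB _ _ (by simp [Fin.ext_iff]; omega))
      · -- j = last
        have hjl : j = Fin.last (k + 1) := by ext; simp; omega
        by_cases hik : (i : ℕ) < k
        · have hi : i = (⟨i, hik⟩ : Fin k).castSucc.castSucc := by ext; simp
          rw [hi, hjl, hB'₁, hB'₃, Matrix.fromBlocks_add]
          simp only [add_zero, zero_add]
          exact aux_lower _ _ _
            (hB _ _ (by simp [Fin.ext_iff]; omega)) (hB _ _ (by simp [Fin.ext_iff]; omega))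
        · have hik' : (i : ℕ) = k := by
            have := hlt
            rw [hjl] at this
            simp [Fin.lt_def] at this
            omega
          have hi : i = (⟨k, by omega⟩ : Fin (k + 2)) := by ext; simp [hik']
          rw [hi, hjl, hB'₂, hB'₃, Matrix.fromBlocks_add]
          simp only [add_zero, zero_add]
          have hm : (Matrix.fromBlocks 0 1 1 0 : Matrix (Fin r ⊕ Fin r) (Fin r ⊕ Fin r) (ZMod 2)) *
              Matrix.fromBlocks 0 1 1 0 = 1 := by
            rw [Matrix.fromBlocks_multiply, ← Matrix.fromBlocks_one]
            simp
          exact ⟨⟨_, _, hm, hm⟩, rfl⟩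
end

section
/- Let r be even and let B₁,…,B_{k+1} be r×r matrices over F₂ with B_i + B_j invertible for all i ≠ j. Suppose there exist sets R_i, C_i ⊆ [r] with |R_i| = |C_i| = r/2 for i ∈ [k+1] such that B_i|_{R_i, C_i^c} is invertible for each i and B_j|_{R_i, C_i^c} = 0 for all j ≠ i. Set d_{k+1} = Σ_{i=1}^k d_i and d_{k+2} = Σ_{i=1}^{k+1} B_i d_i, where each d_i ∈ F₂^r. Then for each i ∈ [k+1], the vector d_i is uniquely determined by the data {d_j|_{C_i} : j ∈ [k+1], j ≠ i} together with d_{k+2}|_{R_i}. Explicitly, d_i|_{C_i} = Σ_{j≠i, j∈[k+1]} d_j|_{C_i} and d_i|_{C_i^c} = (B_i|_{R_i,C_i^c})⁻¹ · (d_{k+2}|_{R_i} + Σ_{j=1}^{k+1} B_j|_{R_i,C_i} d_j|_{C_i}). -/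
theorem stmt15 {r k : ℕ} (hr : Even r)
    (B : Fin (k + 1) → Matrix (Fin r) (Fin r) (ZMod 2))
    (hMDS : ∀ i j : Fin (k + 1), i ≠ j → IsUnit (B i + B j))
    (R C : Fin (k + 1) → Finset (Fin r))
    (hRcard : ∀ i, (R i).card = r / 2) (hCcard : ∀ i, (C i).card = r / 2)
    -- `Binv i` is a two-sided inverse of the submatrix `B i |_{R i, (C i)ᶜ}` :
    (Binv : ∀ i, Matrix {x // x ∈ (C i)ᶜ} {x // x ∈ R i} (ZMod 2))
    (hinv : ∀ i,
      (B i).submatrix (fun a : {x // x ∈ R i} => (a : Fin r))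
          (fun b : {x // x ∈ (C i)ᶜ} => (b : Fin r)) * Binv i = 1 ∧
      Binv i * (B i).submatrix (fun a : {x // x ∈ R i} => (a : Fin r))
          (fun b : {x // x ∈ (C i)ᶜ} => (b : Fin r)) = 1)
    (hzero : ∀ i j : Fin (k + 1), j ≠ i →
      (B j).submatrix (fun a : {x // x ∈ R i} => (a : Fin r))
        (fun b : {x // x ∈ (C i)ᶜ} => (b : Fin r)) = 0)
    -- data blocks: `d i` for `i ∈ [k]` arbitrary, `d (k+1)` the row parity
    (d : Fin (k + 1) → Fin r → ZMod 2)
    (hd : d (Fin.last k) = ∑ j : Fin k, d j.castSucc) :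
    ∀ i : Fin (k + 1),
      (∀ x ∈ C i, d i x = ∑ j ∈ Finset.univ.erase i, d j x) ∧
      (∀ x : {z // z ∈ (C i)ᶜ},
        d i x = ∑ z : {w // w ∈ R i}, Binv i x z *
          ((∑ j : Fin (k + 1), ∑ y : Fin r, B j (z : Fin r) y * d j y) +
           ∑ j : Fin (k + 1), ∑ y : {w // w ∈ C i},
             B j (z : Fin r) (y : Fin r) * d j y)) := by
  intro i
  have hchar : ∀ a : ZMod 2, a + a = 0 := fun a => CharTwo.add_self_eq_zero a
  constructor
  · intro x _
    have hS : (∑ j : Fin (k + 1), d j x) = 0 := by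
      rw [Fin.sum_univ_castSucc]
      have h1 : d (Fin.last k) x = ∑ j : Fin k, d j.castSucc x := by
        rw [hd]; simp
      rw [h1, hchar]
    have h2 : d i x + ∑ j ∈ Finset.univ.erase i, d j x = 0 := by
      rw [Finset.add_sum_erase Finset.univ (fun j => d j x) (Finset.mem_univ i)]
      exact hS
    linear_combination h2 - hchar (∑ j ∈ Finset.univ.erase i, d j x)
  · intro x
    set Bs := (B i).submatrix (fun a : {x // x ∈ R i} => (a : Fin r))
        (fun b : {x // x ∈ (C i)ᶜ} => (b : Fin r)) with hBs
    have key : ∀ z : {w // w ∈ R i},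
        ((∑ j : Fin (k + 1), ∑ y : Fin r, B j (z : Fin r) y * d j y) +
           ∑ j : Fin (k + 1), ∑ y : {w // w ∈ C i},
             B j (z : Fin r) (y : Fin r) * d j y)
        = ∑ y : {w // w ∈ (C i)ᶜ}, Bs z y * d i y := by
      intro z
      have split : ∀ j : Fin (k + 1),
          (∑ y : Fin r, B j (z : Fin r) y * d j y)
          = (∑ y ∈ C i, B j (z : Fin r) y * d j y)
            + ∑ y ∈ (C i)ᶜ, B j (z : Fin r) y * d j y :=
        fun j => (Finset.sum_add_sum_compl (C i) _).symm
      have hsub : ∀ j : Fin (k + 1),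
          (∑ y : {w // w ∈ C i}, B j (z : Fin r) (y : Fin r) * d j y)
          = ∑ y ∈ C i, B j (z : Fin r) y * d j y :=
        fun j => Finset.sum_coe_sort (C i) (fun y => B j (z : Fin r) y * d j y)
      calc ((∑ j : Fin (k + 1), ∑ y : Fin r, B j (z : Fin r) y * d j y) +
           ∑ j : Fin (k + 1), ∑ y : {w // w ∈ C i},
             B j (z : Fin r) (y : Fin r) * d j y)
          = ∑ j : Fin (k + 1), ((∑ y : Fin r, B j (z : Fin r) y * d j y)
              + ∑ y : {w // w ∈ C i}, B j (z : Fin r) (y : Fin r) * d j y) := by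
            rw [Finset.sum_add_distrib]
        _ = ∑ j : Fin (k + 1), ∑ y ∈ (C i)ᶜ, B j (z : Fin r) y * d j y := by
            refine Finset.sum_congr rfl fun j _ => ?_
            rw [split j, hsub j]
            linear_combination hchar (∑ y ∈ C i, B j (z : Fin r) y * d j y)
        _ = ∑ y ∈ (C i)ᶜ, B i (z : Fin r) y * d i y := by
            refine Fintype.sum_eq_single i fun j hj => ?_
            refine Finset.sum_eq_zero fun y hy => ?_
            have h0 := congrFun (congrFun (hzero i j hj) z) ⟨y, hy⟩
            simp only [Matrix.submatrix_apply, Matrix.zero_apply] at h0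
            rw [h0, zero_mul]
        _ = ∑ y : {w // w ∈ (C i)ᶜ}, Bs z y * d i y := by
            rw [← Finset.sum_coe_sort ((C i)ᶜ)
              (fun y => B i (z : Fin r) y * d i y)]
            rfl
    have hrw : (∑ z : {w // w ∈ R i}, Binv i x z *
          ((∑ j : Fin (k + 1), ∑ y : Fin r, B j (z : Fin r) y * d j y) +
           ∑ j : Fin (k + 1), ∑ y : {w // w ∈ C i},
             B j (z : Fin r) (y : Fin r) * d j y))
        = ((Binv i * Bs).mulVec (fun y : {w // w ∈ (C i)ᶜ} => d i y)) x := by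
      rw [← Matrix.mulVec_mulVec]
      simp only [Matrix.mulVec, dotProduct]
      exact Finset.sum_congr rfl fun z _ => by rw [key z]
    rw [hrw, (hinv i).2, Matrix.one_mulVec]
end
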